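/- Let m ≥ 1 and ℓ ≥ 2. Suppose x = (x_0,…,x_ℓ) is an (ℓ,m)-Dyck path such that (x_0−m)+(x_1−m)+⋯+(x_j−m) ≤ −m for all 1 ≤ j ≤ ℓ−1. Then x' = (x_1, …, x_{ℓ−1}, x'_ℓ), where x'_ℓ = mℓ − (x_1+⋯+x_{ℓ−1}), is an (ℓ−1,m)-Dyck path, and degr(x) = x_0·(ℓ−1) + degr(x'). -/

import Mathlib

open Finset

/-- Partial sum of the first `i` entries of a sequence. -/
def pSum (x : ℕ → ℤ) (i : ℕ) : ℤ := ∑ k ∈ Finset.range i, x k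

/-- An `(ℓ,m)`-Dyck path in step coordinates, encoded as a sequence `ℕ → ℤ` of
nonnegative integers vanishing beyond index `ℓ`. -/
def IsDyck (ℓ m : ℕ) (x : ℕ → ℤ) : Prop :=
  (∀ i, 0 ≤ x i) ∧
  (∀ i < ℓ, pSum x (i + 1) ≤ (m : ℤ) * (i + 1)) ∧
  pSum x (ℓ + 1) = (m : ℤ) * (ℓ + 1) ∧
  (∀ i, ℓ < i → x i = 0)

/-- `δ⁺_{ij}(x) = min(x_i, max(0, (x_i−m)+⋯+(x_j−m)−1))`. -/
def deltaP (m : ℕ) (x : ℕ → ℤ) (i j : ℕ) : ℤ :=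
  min (x i) (max 0 ((∑ k ∈ Finset.Icc i j, (x k - (m : ℤ))) - 1))

/-- `δ⁻_{ij}(x) = min(x_{i−1}, max(0, (m−x_i)+⋯+(m−x_j)))`. -/
def deltaM (m : ℕ) (x : ℕ → ℤ) (i j : ℕ) : ℤ :=
  min (x (i - 1)) (max 0 (∑ k ∈ Finset.Icc i j, ((m : ℤ) - x k)))

/-- `degr⁺(x) = Σ_{1 ≤ i ≤ j ≤ ℓ−1} δ⁺_{ij}(x)`. -/
def degrP (ℓ m : ℕ) (x : ℕ → ℤ) : ℤ :=
  ∑ i ∈ Finset.Icc 1 (ℓ - 1), ∑ j ∈ Finset.Icc i (ℓ - 1), deltaP m x i j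

/-- `degr⁻(x) = Σ_{1 ≤ i ≤ j ≤ ℓ−1} δ⁻_{ij}(x)`. -/
def degrM (ℓ m : ℕ) (x : ℕ → ℤ) : ℤ :=
  ∑ i ∈ Finset.Icc 1 (ℓ - 1), ∑ j ∈ Finset.Icc i (ℓ - 1), deltaM m x i j

/-- `degr(x) = degr⁺(x) + degr⁻(x)`. -/
def degr (ℓ m : ℕ) (x : ℕ → ℤ) : ℤ := degrP ℓ m x + degrM ℓ m x

/-- Position coordinates `a_i = (m−x_0)+⋯+(m−x_{i−1})`, with the convention
`a_s = 0` for `s > ℓ`. -/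
def dyckPos (ℓ m : ℕ) (x : ℕ → ℤ) (i : ℕ) : ℤ :=
  if i ≤ ℓ then (m : ℤ) * i - pSum x i else 0

/-- `area(x) = a_1 + ⋯ + a_ℓ = M − (ℓ·x_0 + ⋯ + 1·x_{ℓ−1})`. -/
def area (ℓ m : ℕ) (x : ℕ → ℤ) : ℤ := ∑ i ∈ Finset.Icc 1 ℓ, dyckPos ℓ m x i

/-- `point(x)`: the minimal `r ≤ ℓ` such that `a_r − a_ℓ > −m`. -/
noncomputable def dyckPoint (ℓ m : ℕ) (x : ℕ → ℤ) : ℕ :=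
  sInf {r : ℕ | -(m : ℤ) < dyckPos ℓ m x r - dyckPos ℓ m x ℓ}

/-- `pair(x)`: the minimal `r < ℓ` such that `a_r − a_{r+2} ≥ −m`. -/
noncomputable def dyckPair (ℓ m : ℕ) (x : ℕ → ℤ) : ℕ :=
  sInf {r : ℕ | r < ℓ ∧ -(m : ℤ) ≤ dyckPos ℓ m x r - dyckPos ℓ m x (r + 2)}

/-- `x` is rightable at `r`. -/
def RightableAt (ℓ m : ℕ) (x : ℕ → ℤ) (r : ℕ) : Prop :=
  dyckPoint ℓ m x = r ∧ r < ℓ ∧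
    ∀ i, i + 2 ≤ r → dyckPos ℓ m x i - dyckPos ℓ m x (i + 2) < -(m : ℤ)

/-- `x` is leftable at `r`. -/
def LeftableAt (ℓ m : ℕ) (x : ℕ → ℤ) (r : ℕ) : Prop :=
  dyckPair ℓ m x = r ∧ dyckPos ℓ m x (r + 1) - dyckPos ℓ m x ℓ ≤ (m : ℤ) + 1

/-- Reconstruct step coordinates from position coordinates:
`x_i = m + a_i − a_{i+1}` (with `a_{ℓ+1} = 0`), vanishing beyond `ℓ`. -/
def fromPos (ℓ m : ℕ) (a : ℕ → ℤ) : ℕ → ℤ :=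
  fun i => if i ≤ ℓ then (m : ℤ) + a i - a (i + 1) else 0

/-- Position coordinates of `cycleright(r,x)`:
`[a_0,…,a_r, a_ℓ+1, a_{r+1},…,a_{ℓ−1}]`. -/
def rightPosSeq (ℓ m : ℕ) (x : ℕ → ℤ) (r : ℕ) : ℕ → ℤ := fun i =>
  if i ≤ r then dyckPos ℓ m x i
  else if i = r + 1 then dyckPos ℓ m x ℓ + 1
  else if i ≤ ℓ then dyckPos ℓ m x (i - 1)
  else 0

/-- `right(x)` when `x` is rightable at `r`. -/
def rightMap (ℓ m : ℕ) (x : ℕ → ℤ) (r : ℕ) : ℕ → ℤ := fromPos ℓ m (rightPosSeq ℓ m x r)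

/-- Position coordinates of `cycleleft(r,x)`:
`[a_0,…,a_r, a_{r+2},…,a_ℓ, a_{r+1}−1]`. -/
def leftPosSeq (ℓ m : ℕ) (x : ℕ → ℤ) (r : ℕ) : ℕ → ℤ := fun i =>
  if i ≤ r then dyckPos ℓ m x i
  else if i < ℓ then dyckPos ℓ m x (i + 1)
  else if i = ℓ then dyckPos ℓ m x (r + 1) - 1
  else 0

/-- `left(x)` when `x` is leftable at `r`. -/
def leftMap (ℓ m : ℕ) (x : ℕ → ℤ) (r : ℕ) : ℕ → ℤ := fromPos ℓ m (leftPosSeq ℓ m x r)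

def Rightable (ℓ m : ℕ) (x : ℕ → ℤ) : Prop := ∃ r, RightableAt ℓ m x r

def Leftable (ℓ m : ℕ) (x : ℕ → ℤ) : Prop := ∃ r, LeftableAt ℓ m x r

/-- One application of `right` (meaningful when `x` is rightable). -/
noncomputable def rightStep (ℓ m : ℕ) (x : ℕ → ℤ) : ℕ → ℤ := rightMap ℓ m x (dyckPoint ℓ m x)

/-- One application of `left` (meaningful when `x` is leftable). -/
noncomputable def leftStep (ℓ m : ℕ) (x : ℕ → ℤ) : ℕ → ℤ := leftMap ℓ m x (dyckPair ℓ m x)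

/-- `y = lowest(x)`: `y = rightⁱ(x)` with all intermediate steps rightable and
`y` itself not rightable. -/
def IsLowestOf (ℓ m : ℕ) (x y : ℕ → ℤ) : Prop :=
  (∃ k, (∀ j < k, Rightable ℓ m ((rightStep ℓ m)^[j] x)) ∧ y = (rightStep ℓ m)^[k] x) ∧
    ¬ Rightable ℓ m y

/-- `x` is disconnected: some `leftⁱ(x)` is a Dyck path that is not leftable. -/
def Disconnected (ℓ m : ℕ) (x : ℕ → ℤ) : Prop :=
  ∃ i, IsDyck ℓ m ((leftStep ℓ m)^[i] x) ∧ ¬ Leftable ℓ m ((leftStep ℓ m)^[i] x)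

def ConnectedPath (ℓ m : ℕ) (x : ℕ → ℤ) : Prop := ¬ Disconnected ℓ m x

/-- `string(v₀) = {rightⁱ(v₀) : 0 ≤ i ≤ b}` where `right^b(v₀) = lowest(v₀)`. -/
def stringSet (ℓ m : ℕ) (v0 : ℕ → ℤ) : Set (ℕ → ℤ) :=
  {y | ∃ i, (∀ j < i, Rightable ℓ m ((rightStep ℓ m)^[j] v0)) ∧ y = (rightStep ℓ m)^[i] v0}

/-- A matrix in `𝐌_{m×ℓ}`, encoded as `M : ℕ → ℕ → Option Bool`
(`some false` = 0, `some true` = 1, `none` = ∗; entries outside the `m×ℓ`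
range are normalized to `none`). -/
def IsGoodMatrix (m ℓ : ℕ) (M : ℕ → ℕ → Option Bool) : Prop :=
  (∀ i j, m ≤ i ∨ ℓ ≤ j → M i j = none) ∧
  (∀ i j i' j', i < m → j < ℓ → i' < m → j' < ℓ → M i j = none →
    (i < i' ∨ (i = i' ∧ j < j')) → M i' j' = none) ∧
  M 0 0 = some false ∧
  (∀ i j, i < m → j < ℓ → M i j ≠ none →
    (M i j = some true ∨
      ∃ i' j', i' < m ∧ j' < ℓ ∧ (i < i' ∨ (i = i' ∧ j < j')) ∧ M i' j' ≠ none)) ∧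
  (∀ i j, M i j = some false → M (i + 1) j ≠ some true)

/-- `|M|`: the number of `(0,1)` pairs of entries of `M` in contact. -/
def contactCount (m ℓ : ℕ) (M : ℕ → ℕ → Option Bool) : ℕ :=
  (((Finset.range m ×ˢ Finset.range ℓ) ×ˢ (Finset.range m ×ˢ Finset.range ℓ)).filter
    fun p => M p.1.1 p.1.2 = some false ∧ M p.2.1 p.2.2 = some true ∧
      ((p.2.1 = p.1.1 ∧ p.1.2 < p.2.2) ∨ (p.2.1 = p.1.1 + 1 ∧ p.2.2 ≤ p.1.2))).card

/-- `h(M)`: the number of `0` entries of `M`. -/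
def zeroCount (m ℓ : ℕ) (M : ℕ → ℕ → Option Bool) : ℕ :=
  ((Finset.range m ×ˢ Finset.range ℓ).filter fun p => M p.1 p.2 = some false).card

/-- `w(M)`: the number of `1` entries of `M`. -/
def oneCount (m ℓ : ℕ) (M : ℕ → ℕ → Option Bool) : ℕ :=
  ((Finset.range m ×ˢ Finset.range ℓ).filter fun p => M p.1 p.2 = some true).card

/-- A partition with all parts ≤ `b`, as a weakly decreasing list of positive
integers. -/
def IsPartitionList (b : ℕ) (L : List ℕ) : Prop :=
  L.Pairwise (· ≥ ·) ∧ ∀ p ∈ L, 0 < p ∧ p ≤ b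

/-- The `(ℓ−1)`-width `w^{ℓ−1}(λ)`: the sum of the lengths of the
`(ℓ−1)`-hook rows of `λ` (row 1 is a hook row; if row `i` is a hook row, so is
row `i + ℓ − λ_i`). -/
def hookWidth (ℓ : ℕ) : List ℕ → ℕ
  | [] => 0
  | p :: rest => p + hookWidth ℓ (rest.drop (ℓ - p - 1))
  termination_by L => L.length
  decreasing_by
    simp only [List.length_drop, List.length_cons]
    omega

/-- The number of `1` entries in column `j` of `M`. -/
def colOnes (m : ℕ) (M : ℕ → ℕ → Option Bool) (j : ℕ) : ℕ :=
  ((Finset.range m).filter fun i => M i j = some true).card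

/-- The map `f`: the path with position coordinates `[0,a_1,…,a_ℓ]` where `a_j`
is the number of `1` entries in column `j` of `M`. -/
def pathOfMatrix (ℓ m : ℕ) (M : ℕ → ℕ → Option Bool) : ℕ → ℤ :=
  fromPos ℓ m fun i => if i = 0 then 0 else if i ≤ ℓ then (colOnes m M (i - 1) : ℤ) else 0

/-- The number of `1` entries in contact with the `0` entry at `(i,j)`. -/
def zContacts (m ℓ : ℕ) (M : ℕ → ℕ → Option Bool) (i j : ℕ) : ℕ :=
  ((Finset.range m ×ˢ Finset.range ℓ).filter
    fun q => M q.1 q.2 = some true ∧ ((q.1 = i ∧ j < q.2) ∨ (q.1 = i + 1 ∧ q.2 ≤ j))).card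

/-- The number of `0` entries strictly before `(i,j)` in row-reading order. -/
def zIndex (m ℓ : ℕ) (M : ℕ → ℕ → Option Bool) (i j : ℕ) : ℕ :=
  ((Finset.range m ×ˢ Finset.range ℓ).filter
    fun q => M q.1 q.2 = some false ∧ (q.1 < i ∨ (q.1 = i ∧ q.2 < j))).card

/-- `M` realizes the partition `L`: the `i`-th `0` entry of `M` in row-reading
order is in contact with exactly `L_i` entries equal to `1`. -/
def MatRealizes (m ℓ : ℕ) (M : ℕ → ℕ → Option Bool) (L : List ℕ) : Prop :=
  zeroCount m ℓ M = L.length ∧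
  ∀ i j, i < m → j < ℓ → M i j = some false →
    zContacts m ℓ M i j = L.getD (zIndex m ℓ M i j) 0

/-- `x = f(g(L))` for the bijections `f`, `g` (characterized relationally). -/
def IsFG (ℓ m : ℕ) (L : List ℕ) (x : ℕ → ℤ) : Prop :=
  ∃ M, IsGoodMatrix m ℓ M ∧ contactCount m ℓ M < (ℓ - 1) * m ∧ MatRealizes m ℓ M L ∧
    x = pathOfMatrix ℓ m M

/-- The partition with `p i` parts of size `ℓ−1−i`, for `0 ≤ i ≤ ℓ−2`. -/
def partitionOfCounts (ℓ : ℕ) (p : ℕ → ℕ) : List ℕ :=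
  (List.range (ℓ - 1)).flatMap fun i => List.replicate (p i) (ℓ - 1 - i)

/-- `M = m·ℓ(ℓ+1)/2`, the maximal possible area. -/
def MVal (ℓ m : ℕ) : ℕ := m * ℓ * (ℓ + 1) / 2

/-- The predicate `extendable(ℓ,m,d)`. -/
def Extendable (ℓ m : ℕ) (d : ℤ) : Prop :=
  ∃ ext : List ℕ → Set (ℕ → ℤ),
    (∀ L, IsPartitionList (ℓ - 1) L → (L.sum : ℤ) = d →
      (ext L ⊆ {w | IsDyck ℓ m w ∧ degr ℓ m w = d ∧ Disconnected ℓ m w}) ∧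
      (∀ w w', w ∈ ext L → w' ∈ ext L → area ℓ m w = area ℓ m w' → w = w') ∧
      (∀ v0, IsFG ℓ m L v0 → ∀ vs, IsLowestOf ℓ m v0 vs →
        area ℓ m vs ≤ (MVal ℓ m : ℤ) - L.sum - L.length ∧
        ∀ a : ℤ, (area ℓ m vs < a ∧ a ≤ (MVal ℓ m : ℤ) - L.sum - L.length) ↔
          ∃ w ∈ ext L, area ℓ m w = a)) ∧
    ({w | IsDyck ℓ m w ∧ degr ℓ m w = d ∧ Disconnected ℓ m w} =
      ⋃ L ∈ {L : List ℕ | IsPartitionList (ℓ - 1) L ∧ (L.sum : ℤ) = d}, ext L) ∧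
    (∀ L L', IsPartitionList (ℓ - 1) L → (L.sum : ℤ) = d →
      IsPartitionList (ℓ - 1) L' → (L'.sum : ℤ) = d → L ≠ L' → ext L ∩ ext L' = ∅)

lemma sum_range_split (f : ℕ → ℤ) (j : ℕ) :
    ∑ k ∈ Finset.range (j+1), f k = f 0 + ∑ k ∈ Finset.Icc 1 j, f k := by
  have h : Finset.range (j+1) = insert 0 (Finset.Icc 1 j) := by
    ext k; simp [Finset.mem_Icc, Finset.mem_insert, Finset.mem_range]; omega
  rw [h, Finset.sum_insert (by simp)]

lemma sum_Icc_shift (f : ℕ → ℤ) (a b : ℕ) :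
    ∑ k ∈ Finset.Icc a b, f (k+1) = ∑ k ∈ Finset.Icc (a+1) (b+1), f k := by
  rw [← Finset.map_add_right_Icc, Finset.sum_map]
  rfl

lemma sum_range_shift (f : ℕ → ℤ) (n : ℕ) :
    ∑ k ∈ Finset.range n, f (k+1) = ∑ k ∈ Finset.Icc 1 n, f k := by
  induction n with
  | zero => simp
  | succ t ih =>
      rw [Finset.sum_range_succ, ih, Finset.sum_Icc_succ_top (by omega)]

lemma Icc_split (n : ℕ) (hn : 1 ≤ n) (f : ℕ → ℤ) :
    ∑ i ∈ Finset.Icc 1 n, f i = f 1 + ∑ i ∈ Finset.Icc 2 n, f i := by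
  have h : Finset.Icc 1 n = insert 1 (Finset.Icc 2 n) := by
    ext k; simp [Finset.mem_Icc, Finset.mem_insert]; omega
  rw [h, Finset.sum_insert (by simp)]

/-- Claim `fitsin`: if `x = (x_0,…,x_ℓ)` is an `(ℓ,m)`-Dyck path all of whose
proper partial sums `(x_0−m)+⋯+(x_j−m)` (for `1 ≤ j ≤ ℓ−1`) are `≤ −m`, then
deleting `x₀` yields an `(ℓ−1,m)`-Dyck path `x'` with
`degr(x) = x₀(ℓ−1) + degr(x')`. -/
theorem statement1 (ℓ m : ℕ) (hm : 1 ≤ m) (hl : 2 ≤ ℓ) (x : ℕ → ℤ)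
    (hx : IsDyck ℓ m x)
    (hsmall : ∀ j, 1 ≤ j → j ≤ ℓ - 1 →
      ∑ k ∈ Finset.range (j + 1), (x k - (m : ℤ)) ≤ -(m : ℤ))
    (x' : ℕ → ℤ)
    (hx' : x' = fun i => if i < ℓ - 1 then x (i + 1)
      else if i = ℓ - 1 then (m : ℤ) * (ℓ : ℤ) - ∑ k ∈ Finset.Icc 1 (ℓ - 1), x k else 0) :
    IsDyck (ℓ - 1) m x' ∧ degr ℓ m x = x 0 * ((ℓ : ℤ) - 1) + degr (ℓ - 1) m x' := by
  obtain ⟨hpos, hle, htot, hvan⟩ := hx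
  have hx0 : 0 ≤ x 0 := hpos 0
  have hkey : ∀ j, 1 ≤ j → j ≤ ℓ - 1 →
      ∑ k ∈ Finset.Icc 1 j, (x k - (m : ℤ)) ≤ -(x 0) := by
    intro j h1 h2
    have h := hsmall j h1 h2
    rw [sum_range_split] at h
    linarith
  have hx'lt : ∀ i, i < ℓ - 1 → x' i = x (i + 1) := by
    intro i h; rw [hx']; simp [h]
  have hx'top : x' (ℓ - 1) = (m : ℤ) * (ℓ : ℤ) - ∑ k ∈ Finset.Icc 1 (ℓ - 1), x k := by
    rw [hx']; simp
  have hx'van : ∀ i, ℓ - 1 < i → x' i = 0 := by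
    intro i h; rw [hx']; simp only
    rw [if_neg (by omega), if_neg (by omega)]
  -- bound on partial sums of x over Icc 1 j
  have hBnd : ∀ j, 1 ≤ j → j ≤ ℓ - 1 →
      ∑ k ∈ Finset.Icc 1 j, x k ≤ (m : ℤ) * (j : ℤ) - x 0 := by
    intro j h1 h2
    have h := hkey j h1 h2
    rw [Finset.sum_sub_distrib, Finset.sum_const, Nat.card_Icc] at h
    have hc : ((j + 1 - 1 : ℕ) : ℤ) = (j : ℤ) := by omega
    rw [nsmul_eq_mul, hc] at h
    linarith
  have hsum_shift : ∀ n, n ≤ ℓ - 1 →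
      pSum x' n = ∑ k ∈ Finset.Icc 1 n, x k := by
    intro n hn
    unfold pSum
    have h1 : ∀ k ∈ Finset.range n, x' k = x (k + 1) := by
      intro k hk; rw [Finset.mem_range] at hk; exact hx'lt k (by omega)
    rw [Finset.sum_congr rfl h1, sum_range_shift]
  have hDyck : IsDyck (ℓ - 1) m x' := by
    refine ⟨?_, ?_, ?_, hx'van⟩
    · intro i
      rcases lt_trichotomy i (ℓ - 1) with h | h | h
      · rw [hx'lt i h]; exact hpos (i + 1)
      · subst h
        rw [hx'top]
        have := hBnd (ℓ - 1) (by omega) le_rfl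
        have hc : ((ℓ - 1 : ℕ) : ℤ) = (ℓ : ℤ) - 1 := by omega
        rw [hc] at this
        have hm0 : (0:ℤ) ≤ m := by positivity
        nlinarith
      · rw [hx'van i h]
    · intro i hi
      rw [hsum_shift (i + 1) (by omega)]
      have := hBnd (i + 1) (by omega) (by omega)
      have hc : ((i + 1 : ℕ) : ℤ) = (i : ℤ) + 1 := by push_cast; ring
      calc ∑ k ∈ Finset.Icc 1 (i+1), x k ≤ (m : ℤ) * ((i+1 : ℕ) : ℤ) - x 0 := by
            rw [hc]; push_cast at this ⊢; linarith
        _ ≤ (m : ℤ) * ((i : ℤ) + 1) := by push_cast; linarith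
    · have h1 : ℓ - 1 + 1 = ℓ := by omega
      unfold pSum
      rw [h1, show ℓ = (ℓ - 1) + 1 from by omega, Finset.sum_range_succ]
      have h2 : ∑ k ∈ Finset.range (ℓ - 1), x' k = ∑ k ∈ Finset.Icc 1 (ℓ - 1), x k :=
        hsum_shift (ℓ - 1) le_rfl
      rw [h2, hx'top]
      simp only [Nat.add_sub_cancel]
      have hc : ((ℓ - 1 : ℕ) : ℤ) = (ℓ : ℤ) - 1 := by omega
      rw [hc]; ring
  refine ⟨hDyck, ?_⟩
  -- i = 1 rows
  have hdP1 : ∀ j ∈ Finset.Icc 1 (ℓ - 1), deltaP m x 1 j = 0 := by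
    intro j hj; rw [Finset.mem_Icc] at hj
    have hT := hkey j hj.1 hj.2
    unfold deltaP
    rw [max_eq_left (by linarith), min_eq_right (hpos 1)]
  have hdM1 : ∀ j ∈ Finset.Icc 1 (ℓ - 1), deltaM m x 1 j = x 0 := by
    intro j hj; rw [Finset.mem_Icc] at hj
    have hT := hkey j hj.1 hj.2
    have hneg : ∑ k ∈ Finset.Icc 1 j, ((m : ℤ) - x k)
        = -∑ k ∈ Finset.Icc 1 j, (x k - (m : ℤ)) := by
      rw [← Finset.sum_neg_distrib]
      exact Finset.sum_congr rfl (by intros; ring)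
    unfold deltaM
    rw [hneg, max_eq_right (by linarith), min_eq_left (by linarith)]
  -- shifted deltas
  have hdP : ∀ i j, 1 ≤ i → i ≤ j → j ≤ ℓ - 2 →
      deltaP m x' i j = deltaP m x (i + 1) (j + 1) := by
    intro i j h1 h2 h3
    unfold deltaP
    have hxi : x' i = x (i + 1) := hx'lt i (by omega)
    have hsum : ∑ k ∈ Finset.Icc i j, (x' k - (m : ℤ))
        = ∑ k ∈ Finset.Icc (i + 1) (j + 1), (x k - (m : ℤ)) := by
      rw [← sum_Icc_shift]
      refine Finset.sum_congr rfl fun k hk => ?_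
      rw [Finset.mem_Icc] at hk
      rw [hx'lt k (by omega)]
    rw [hxi, hsum]
  have hdM : ∀ i j, 1 ≤ i → i ≤ j → j ≤ ℓ - 2 →
      deltaM m x' i j = deltaM m x (i + 1) (j + 1) := by
    intro i j h1 h2 h3
    unfold deltaM
    have hxi : x' (i - 1) = x ((i + 1) - 1) := by
      rw [hx'lt (i - 1) (by omega)]
      congr 1; omega
    have hsum : ∑ k ∈ Finset.Icc i j, ((m : ℤ) - x' k)
        = ∑ k ∈ Finset.Icc (i + 1) (j + 1), ((m : ℤ) - x k) := by
      rw [← sum_Icc_shift]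
      refine Finset.sum_congr rfl fun k hk => ?_
      rw [Finset.mem_Icc] at hk
      rw [hx'lt k (by omega)]
    rw [hxi, hsum]
  -- splitting lemma, generic in the delta
  have hgen : ∀ (d d' : ℕ → ℕ → ℤ),
      (∀ i j, 1 ≤ i → i ≤ j → j ≤ ℓ - 2 → d' i j = d (i + 1) (j + 1)) →
      ∑ i ∈ Finset.Icc 1 (ℓ - 1), ∑ j ∈ Finset.Icc i (ℓ - 1), d i j
        = (∑ j ∈ Finset.Icc 1 (ℓ - 1), d 1 j)
          + ∑ i ∈ Finset.Icc 1 (ℓ - 2), ∑ j ∈ Finset.Icc i (ℓ - 2), d' i j := by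
    intro d d' hshift
    rw [Icc_split (ℓ - 1) (by omega)]
    congr 1
    calc ∑ i ∈ Finset.Icc 2 (ℓ - 1), ∑ j ∈ Finset.Icc i (ℓ - 1), d i j
        = ∑ i ∈ Finset.Icc (1 + 1) ((ℓ - 2) + 1),
            ∑ j ∈ Finset.Icc i ((ℓ - 2) + 1), d i j := by
          rw [show (ℓ - 2) + 1 = ℓ - 1 from by omega]
      _ = ∑ i ∈ Finset.Icc 1 (ℓ - 2),
            ∑ j ∈ Finset.Icc (i + 1) ((ℓ - 2) + 1), d (i + 1) j :=
          (sum_Icc_shift (fun i => ∑ j ∈ Finset.Icc i ((ℓ - 2) + 1), d i j) 1 (ℓ - 2)).symm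
      _ = ∑ i ∈ Finset.Icc 1 (ℓ - 2), ∑ j ∈ Finset.Icc i (ℓ - 2), d' i j := by
          refine Finset.sum_congr rfl fun i hi => ?_
          rw [Finset.mem_Icc] at hi
          rw [← sum_Icc_shift]
          refine Finset.sum_congr rfl fun j hj => ?_
          rw [Finset.mem_Icc] at hj
          exact (hshift i j hi.1 hj.1 hj.2).symm
  have hP : degrP ℓ m x = 0 + degrP (ℓ - 1) m x' := by
    unfold degrP
    rw [show ℓ - 1 - 1 = ℓ - 2 from by omega]
    rw [hgen (deltaP m x) (deltaP m x') hdP]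
    rw [Finset.sum_eq_zero hdP1]
  have hM : degrM ℓ m x = x 0 * ((ℓ : ℤ) - 1) + degrM (ℓ - 1) m x' := by
    unfold degrM
    rw [show ℓ - 1 - 1 = ℓ - 2 from by omega]
    rw [hgen (deltaM m x) (deltaM m x') hdM]
    congr 1
    rw [Finset.sum_congr rfl hdM1, Finset.sum_const, Nat.card_Icc, nsmul_eq_mul]
    have hc : ((ℓ - 1 + 1 - 1 : ℕ) : ℤ) = (ℓ : ℤ) - 1 := by omega
    rw [hc, mul_comm]
  unfold degr
  rw [hP, hM]
  ring
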